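/- Let n ≥ 2, let T be an n-tree, and let T_1, …, T_k be a list of n-trees. Then: (1) if T is good, then the double negation of 'T is very good' holds; (2) if it is false that T_i is very good for every 1 ≤ i ≤ k, then there is some 1 ≤ i ≤ k such that T_i is not good. -/
import Mathlib


/-- `ℕ∞`: decreasing binary sequences `ℕ → {0,1}`. -/
def DecSeq (α : ℕ → ℕ) : Prop := (∀ i, α i ≤ 1) ∧ ∀ i j, i ≤ j → α j ≤ α i

/-- The set `ℕ∞` as a type. -/
def NInf : Type := {α : ℕ → ℕ // DecSeq α}

/-- `n`-trees. -/
inductive NTree (n : ℕ) : Type where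
  | nil : NTree n
  | node : (Fin n → NTree n) → (Fin n → NInf) → NTree n

/-- Good `n`-trees. -/
inductive Good {n : ℕ} : NTree n → Prop where
  | nil : Good .nil
  | node {ts : Fin n → NTree n} {as : Fin n → NInf}
      (h1 : ∀ i j : Fin n, i ≠ j → ∀ k, max ((as i).val k) ((as j).val k) = 1)
      (h2 : ∀ i, (as i).val = (fun _ => 1) → Good (ts i)) :
      Good (.node ts as)

/-- Very good `n`-trees. -/
inductive VeryGood {n : ℕ} : NTree n → Prop where
  | nil : VeryGood .nil
  | node {ts : Fin n → NTree n} {as : Fin n → NInf}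
      (hg : Good (.node ts as)) (i : Fin n)
      (h1 : (as i).val = (fun _ => 1)) (hv : VeryGood (ts i)) :
      VeryGood (.node ts as)

lemma good_veryGood {n : ℕ} (hn : 2 ≤ n) : ∀ T : NTree n, Good T → VeryGood T := by
  intro T hT
  induction hT with
  | nil => exact VeryGood.nil
  | @node ts as h1 h2 ih =>
    -- find i with (as i).val = 1
    have hex : ∃ i : Fin n, (as i).val = (fun _ => 1) := by
      by_contra hno
      push_neg at hno
      have hzero : ∀ i : Fin n, ∃ k, (as i).val k = 0 := by
        intro i
        have := hno i
        by_contra hz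
        push_neg at hz
        exact this (funext fun k => le_antisymm ((as i).2.1 k)
          (Nat.one_le_iff_ne_zero.mpr (hz k)))
      obtain ⟨k0, hk0⟩ := hzero ⟨0, by omega⟩
      obtain ⟨k1, hk1⟩ := hzero ⟨1, by omega⟩
      have hne : (⟨0, by omega⟩ : Fin n) ≠ ⟨1, by omega⟩ := by
        simp [Fin.ext_iff]
      have h := h1 ⟨0, by omega⟩ ⟨1, by omega⟩ hne (max k0 k1)
      have h0 : (as ⟨0, by omega⟩).val (max k0 k1) = 0 := by
        have := (as (⟨0, by omega⟩ : Fin n)).2.2 k0 (max k0 k1) (le_max_left _ _)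
        omega
      have h1' : (as ⟨1, by omega⟩).val (max k0 k1) = 0 := by
        have := (as (⟨1, by omega⟩ : Fin n)).2.2 k1 (max k0 k1) (le_max_right _ _)
        omega
      rw [h0, h1'] at h
      simp at h
    obtain ⟨i, hi⟩ := hex
    exact VeryGood.node (Good.node h1 h2) i hi (ih i hi)

theorem good_not_not_very_good_and_not_all_very_good_exists_not_good
    (n : ℕ) (hn : 2 ≤ n) :
    (∀ T : NTree n, Good T → ¬¬ VeryGood T) ∧
    (∀ (k : ℕ) (Ts : Fin k → NTree n),
      ¬ (∀ i, VeryGood (Ts i)) → ∃ i, ¬ Good (Ts i)) := by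
  constructor
  · intro T hT h
    exact h (good_veryGood hn T hT)
  · intro k Ts h
    by_contra hno
    push_neg at hno
    exact h fun i => good_veryGood hn (Ts i) (hno i)
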